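/- Let U_A be a block-encoding of a Hermitian A with m ancillae, and define V_A := (U_A† ⊗ I_out)(CX)(U_A ⊗ I_out) where CX flips the output qubit controlled on the ancilla register being |0^m⟩ (i.e. CX = X ⊗ |0^m⟩⟨0^m| + I ⊗ (I − |0^m⟩⟨0^m|)). Then (I ⊗ ⟨0^m| ⊗ I) V_A (|0⟩ ⊗ |0^m⟩ ⊗ I) = |1⟩ ⊗ A² + |0⟩ ⊗ (I − A²). -/

import Mathlib

open scoped Matrix
open scoped Kronecker

/-- The block-measurement circuit: with `U_A` a block-encoding of Hermitian `A`
(with ancilla state `a₀`), `V_A = (1⊗U_A)† · CX · (1⊗U_A)` where `CX` flips the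
output qubit controlled on the ancillae being `a₀`. Postselecting the ancillae on
`a₀` with input ancillae `a₀` and input output-qubit `|0⟩`, `V_A` block-encodes
`|1⟩⊗A² + |0⟩⊗(I−A²)`. -/
theorem blockMeasurement_circuit {ι α : Type*} [Fintype ι] [DecidableEq ι]
    [Fintype α] [DecidableEq α] (a₀ : α)
    (U_A : Matrix (α × ι) (α × ι) ℂ) (hU : U_A ∈ Matrix.unitaryGroup (α × ι) ℂ)
    (A : Matrix ι ι ℂ) (hA : A = fun i j => U_A (a₀, i) (a₀, j)) (hAH : A.IsHermitian)
    (P0 : Matrix α α ℂ) (hP0 : P0 = Matrix.single a₀ a₀ 1)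
    (CX Uext VA : Matrix (Fin 2 × α × ι) (Fin 2 × α × ι) ℂ)
    (hCX : CX = (!![0, 1; 1, 0] : Matrix (Fin 2) (Fin 2) ℂ) ⊗ₖ (P0 ⊗ₖ (1 : Matrix ι ι ℂ))
        + (1 : Matrix (Fin 2) (Fin 2) ℂ) ⊗ₖ (((1 : Matrix α α ℂ) - P0) ⊗ₖ (1 : Matrix ι ι ℂ)))
    (hUext : Uext = (1 : Matrix (Fin 2) (Fin 2) ℂ) ⊗ₖ U_A)
    (hVA : VA = Uextᴴ * CX * Uext) :
    ∀ (b : Fin 2) (i j : ι),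
      VA (b, (a₀, i)) (0, (a₀, j))
        = if b = 1 then (A * A) i j else ((1 : Matrix ι ι ℂ) - A * A) i j := by
  -- conjugate transpose of the extended unitary
  have hUextH : Uextᴴ = (1 : Matrix (Fin 2) (Fin 2) ℂ) ⊗ₖ U_Aᴴ := by
    subst hUext
    ext ⟨b, p⟩ ⟨c, q⟩
    simp [Matrix.conjTranspose_apply, Matrix.kroneckerMap_apply, Matrix.one_apply, eq_comm]
    aesop
  -- unitarity
  have hU1 : U_Aᴴ * U_A = 1 := by
    have := hU.1
    rwa [Matrix.star_eq_conjTranspose] at this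
  -- the middle blocks
  set M : Matrix (α × ι) (α × ι) ℂ := U_Aᴴ * (P0 ⊗ₖ (1 : Matrix ι ι ℂ)) * U_A with hM
  have hVA' : VA = (!![0, 1; 1, 0] : Matrix (Fin 2) (Fin 2) ℂ) ⊗ₖ M
      + (1 : Matrix (Fin 2) (Fin 2) ℂ) ⊗ₖ (1 - M) := by
    have h2 : ((1 : Matrix α α ℂ) - P0) ⊗ₖ (1 : Matrix ι ι ℂ)
        = 1 - P0 ⊗ₖ (1 : Matrix ι ι ℂ) := by
      rw [← Matrix.one_kronecker_one (α := ℂ) (m := α) (n := ι)]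
      ext ⟨a, k⟩ ⟨a', k'⟩
      simp [Matrix.kroneckerMap_apply, Matrix.sub_apply, sub_mul, Matrix.one_apply,
        Prod.ext_iff, ite_and]
      split_ifs <;> simp
    rw [hVA, hCX, hUextH, hUext, h2, mul_add, add_mul, ← Matrix.mul_kronecker_mul,
      ← Matrix.mul_kronecker_mul, ← Matrix.mul_kronecker_mul, ← Matrix.mul_kronecker_mul,
      one_mul, mul_one, one_mul]
    simp [Matrix.mul_sub, Matrix.sub_mul, hU1, hM]
  -- entry of M
  have hMentry : ∀ i j : ι, M (a₀, i) (a₀, j) = (A * A) i j := by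
    intro i j
    have : M (a₀, i) (a₀, j) = ∑ k : ι, (starRingEnd ℂ) (U_A (a₀, k) (a₀, i)) * U_A (a₀, k) (a₀, j) := by
      rw [hM]
      simp only [Matrix.mul_apply, Matrix.conjTranspose_apply, Matrix.kroneckerMap_apply,
        Matrix.one_apply, hP0, Matrix.single, Fintype.sum_prod_type]
      simp only [Matrix.of_apply, mul_ite, ite_mul, mul_zero, zero_mul, mul_one, one_mul,
        ite_and, Finset.sum_ite_irrel, Finset.sum_const_zero, Finset.sum_ite_eq,
        Finset.sum_ite_eq', Finset.mem_univ, if_true]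
      exact Finset.sum_congr rfl fun k _ => by rw [starRingEnd_apply]
    rw [this]
    have hAc : Aᴴ * A = A * A := by rw [hAH.eq]
    rw [← hAc, Matrix.mul_apply]
    simp [Matrix.conjTranspose_apply, hA]
    rfl
  intro b i j
  rw [hVA']
  fin_cases b <;>
    simp [Matrix.add_apply, Matrix.kroneckerMap_apply, Matrix.one_apply, hMentry,
      Matrix.sub_apply, Matrix.one_apply]
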